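/- arXiv:2504.18844 — 2 statements merged into one kernel-verified Lean document; each statement's English description precedes it below -/
import Mathlib

section
/- Let p be a prime and let k, m be natural numbers with m ≤ k. The number of m-dimensional subspaces of the vector space (ℤ/pℤ)^k over the field ℤ/pℤ satisfies N · ∏_{i=1}^{m} (p^i − 1) = ∏_{i=1}^{m} (p^{k−i+1} − 1), where N is the cardinality of the set of ℤ/pℤ-submodules of (ℤ/pℤ)^k of finite rank m. (Equivalently, N is the Gaussian binomial coefficient binom(k,m)_p.) -/
open Submodule Module

/-- Auxiliary product identity. -/
lemma prod_sub_pow_eq (p n mm : ℕ) (hp : 1 ≤ p) (h : mm ≤ n) :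
    ∏ i ∈ Finset.range mm, (p ^ n - p ^ i) =
      p ^ (∑ i ∈ Finset.range mm, i) *
        ∏ i ∈ Finset.Icc 1 mm, (p ^ (n - i + 1) - 1) := by
  have h1 : ∀ i ∈ Finset.range mm, p ^ n - p ^ i = p ^ i * (p ^ (n - i) - 1) := by
    intro i hi
    have hi' : i ≤ n := le_trans (le_of_lt (Finset.mem_range.1 hi)) h
    rw [Nat.mul_sub, mul_one, ← pow_add]
    congr 2
    omega
  rw [Finset.prod_congr rfl h1, Finset.prod_mul_distrib, Finset.prod_pow_eq_pow_sum]
  congr 1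
  refine Finset.prod_nbij' (fun i => i + 1) (fun j => j - 1) ?_ ?_ ?_ ?_ ?_
  · intro a ha; simp only [Finset.mem_range] at ha; simp only [Finset.mem_Icc]; omega
  · intro a ha; simp only [Finset.mem_Icc] at ha; simp only [Finset.mem_range]; omega
  · intro a _; omega
  · intro a ha; simp only [Finset.mem_Icc] at ha; omega
  · intro a ha
    simp only [Finset.mem_range] at ha
    congr 2
    omega

/-- For a prime `p` and `m ≤ k`, the number `N` of `m`-dimensional
subspaces (i.e. `ZMod p`-submodules of finite rank `m`) of `(ZMod p)^k` satisfies
`N * ∏_{i=1}^m (p^i - 1) = ∏_{i=1}^m (p^(k-i+1) - 1)`. -/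
theorem count_subspaces_gaussian (p k m : ℕ) (hp : p.Prime) (hm : m ≤ k) :
    Nat.card {W : Submodule (ZMod p) (Fin k → ZMod p) //
        Module.finrank (ZMod p) W = m} *
      ∏ i ∈ Finset.Icc 1 m, (p ^ i - 1) =
      ∏ i ∈ Finset.Icc 1 m, (p ^ (k - i + 1) - 1) := by
  haveI : Fact p.Prime := ⟨hp⟩
  set V := (Fin k → ZMod p) with hV
  have hdim : Module.finrank (ZMod p) V = k :=
    (Module.finrank_fintype_fun_eq_card (ZMod p)).trans (Fintype.card_fin k)
  -- the projection from independent tuples to their spans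
  let fspan : {s : Fin m → V // LinearIndependent (ZMod p) s} →
      {W : Submodule (ZMod p) V // Module.finrank (ZMod p) W = m} :=
    fun s => ⟨Submodule.span (ZMod p) (Set.range s.1), by
      rw [finrank_span_eq_card s.2, Fintype.card_fin]⟩
  -- fibers are sets of independent tuples in W
  have fiber_equiv : ∀ W : {W : Submodule (ZMod p) V // Module.finrank (ZMod p) W = m},
      {s : {s : Fin m → V // LinearIndependent (ZMod p) s} // fspan s = W} ≃
        {t : Fin m → W.1 // LinearIndependent (ZMod p) t} := by
    rintro ⟨W, hW⟩
    refine ⟨fun s => ⟨fun i => ⟨s.1.1 i, ?_⟩, ?_⟩, fun t => ⟨⟨W.subtype ∘ t.1,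
      t.2.map' W.subtype W.ker_subtype⟩, ?_⟩, ?_, ?_⟩
    · have h1 : Submodule.span (ZMod p) (Set.range s.1.1) = W := congrArg Subtype.val s.2
      have h2 := Submodule.subset_span (R := ZMod p) (s := Set.range s.1.1)
        (Set.mem_range_self i)
      rwa [h1] at h2
    · exact LinearIndependent.of_comp W.subtype s.1.2
    · refine Subtype.ext ?_
      simp only [fspan]
      rw [Set.range_comp, ← Submodule.map_span,
        t.2.span_eq_top_of_card_eq_finrank' (by rw [Fintype.card_fin, hW]),
        Submodule.map_top, Submodule.range_subtype]
    · intro s; exact Subtype.ext (Subtype.ext rfl)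
    · intro t; exact Subtype.ext (funext fun i => Subtype.ext rfl)
  -- count both sides
  haveI : Finite {W : Submodule (ZMod p) V // Module.finrank (ZMod p) W = m} :=
    Subtype.finite (α := Submodule (ZMod p) V)
      (p := fun W => Module.finrank (ZMod p) W = m)
  haveI fW := Fintype.ofFinite {W : Submodule (ZMod p) V // Module.finrank (ZMod p) W = m}
  have key : Nat.card {s : Fin m → V // LinearIndependent (ZMod p) s} =
      Nat.card {W : Submodule (ZMod p) V // Module.finrank (ZMod p) W = m} *
        ∏ i : Fin m, (p ^ m - p ^ i.1) := by
    rw [Nat.card_congr (Equiv.sigmaFiberEquiv fspan).symm]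
    have hfib : ∀ W : {W : Submodule (ZMod p) V // Module.finrank (ZMod p) W = m},
        Nat.card {s : {s : Fin m → V // LinearIndependent (ZMod p) s} // fspan s = W} =
          ∏ i : Fin m, (p ^ m - p ^ i.1) := by
      intro W
      rw [Nat.card_congr (fiber_equiv W)]
      rw [card_linearIndependent (le_of_eq W.2.symm)]
      simp [ZMod.card, W.2]
    haveI _instF : ∀ W : {W : Submodule (ZMod p) V // Module.finrank (ZMod p) W = m},
        Finite {s : {s : Fin m → V // LinearIndependent (ZMod p) s} // fspan s = W} := by
      intro W; infer_instance
    haveI := fun W => Fintype.ofFinite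
      {s : {s : Fin m → V // LinearIndependent (ZMod p) s} // fspan s = W}
    rw [Nat.card_eq_fintype_card, Fintype.card_sigma]
    rw [Finset.sum_congr rfl (fun W _ => by rw [← Nat.card_eq_fintype_card, hfib W])]
    rw [Finset.sum_const, Finset.card_univ, Nat.card_eq_fintype_card, smul_eq_mul]
  have lhs : Nat.card {s : Fin m → V // LinearIndependent (ZMod p) s} =
      ∏ i : Fin m, (p ^ k - p ^ i.1) := by
    rw [card_linearIndependent (by rw [hdim]; exact hm)]
    simp [ZMod.card, hdim]
  rw [lhs] at key
  -- convert Fin products to range products and apply the arithmetic identity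
  have hp1 : 1 ≤ p := hp.one_lt.le
  have hk' : (∏ i : Fin m, (p ^ k - p ^ i.1)) =
      p ^ (∑ i ∈ Finset.range m, i) * ∏ i ∈ Finset.Icc 1 m, (p ^ (k - i + 1) - 1) := by
    rw [Fin.prod_univ_eq_prod_range (fun i => p ^ k - p ^ i)]
    exact prod_sub_pow_eq p k m hp1 hm
  have hm' : (∏ i : Fin m, (p ^ m - p ^ i.1)) =
      p ^ (∑ i ∈ Finset.range m, i) * ∏ i ∈ Finset.Icc 1 m, (p ^ (m - i + 1) - 1) := by
    rw [Fin.prod_univ_eq_prod_range (fun i => p ^ m - p ^ i)]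
    exact prod_sub_pow_eq p m m hp1 le_rfl
  have hmm : ∏ i ∈ Finset.Icc 1 m, (p ^ (m - i + 1) - 1) =
      ∏ i ∈ Finset.Icc 1 m, (p ^ i - 1) := by
    refine Finset.prod_nbij' (fun i => m - i + 1) (fun j => m - j + 1) ?_ ?_ ?_ ?_ ?_
    · intro a ha; simp only [Finset.mem_Icc] at *; omega
    · intro a ha; simp only [Finset.mem_Icc] at *; omega
    · intro a ha; simp only [Finset.mem_Icc] at ha; omega
    · intro a ha; simp only [Finset.mem_Icc] at ha; omega
    · intro a _; rfl
  rw [hk', hm', hmm] at key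
  have hppos : 0 < p ^ (∑ i ∈ Finset.range m, i) := Nat.pow_pos hp.pos
  refine Nat.eq_of_mul_eq_mul_left hppos ?_
  rw [show (p ^ ∑ i ∈ Finset.range m, i) *
      (Nat.card {W : Submodule (ZMod p) V // Module.finrank (ZMod p) W = m} *
        ∏ i ∈ Finset.Icc 1 m, (p ^ i - 1)) =
      Nat.card {W : Submodule (ZMod p) V // Module.finrank (ZMod p) W = m} *
        ((p ^ ∑ i ∈ Finset.range m, i) * ∏ i ∈ Finset.Icc 1 m, (p ^ i - 1)) from by ring]
  exact key.symm
end

section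
/- Let k ≥ 2 and let m be an integer with 1 ≤ m ≤ k−1. There exists a bijection f from the set of m-dimensional ℤ/2ℤ-subspaces of (ℤ/2ℤ)^k to the set of (k−m)-dimensional ℤ/2ℤ-subspaces of (ℤ/2ℤ)^k such that for every m-dimensional subspace H, the intersection H ∩ f(H) is the zero subspace. In particular, the number of such pairs (H, f(H)) equals the Gaussian binomial coefficient binom(k,m)_2. -/
open Module Submodule

lemma zmod2_card (V : Type*) [AddCommGroup V] [Module (ZMod 2) V] [Finite V] :
    Nat.card V = 2 ^ finrank (ZMod 2) V := by
  cases nonempty_fintype V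
  rw [Nat.card_eq_fintype_card, card_eq_pow_finrank (K := ZMod 2), ZMod.card]

lemma zmod2_card_li (V : Type*) [AddCommGroup V] [Module (ZMod 2) V] [Finite V]
    {m : ℕ} (hm : m ≤ finrank (ZMod 2) V) :
    Nat.card {v : Fin m → V // LinearIndependent (ZMod 2) v} =
      ∏ i ∈ Finset.range m, (2 ^ finrank (ZMod 2) V - 2 ^ i) := by
  rw [card_linearIndependent hm, ZMod.card, ← Fin.prod_univ_eq_prod_range (fun i => 2 ^ finrank (ZMod 2) V - 2 ^ i) m]

lemma card_subspaces (k m : ℕ) (hmk : m ≤ k) :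
    Nat.card {H : Submodule (ZMod 2) (Fin k → ZMod 2) // finrank (ZMod 2) H = m} *
      ∏ i ∈ Finset.range m, (2 ^ m - 2 ^ i) = ∏ i ∈ Finset.range m, (2 ^ k - 2 ^ i) := by
  classical
  set V := Fin k → ZMod 2 with hVdef
  have hfr : finrank (ZMod 2) V = k := Module.finrank_fin_fun _
  set A := {H : Submodule (ZMod 2) V // finrank (ZMod 2) H = m} with hA
  let π : {v : Fin m → V // LinearIndependent (ZMod 2) v} → A := fun v =>
    ⟨span (ZMod 2) (Set.range v.1), by
      rw [finrank_span_eq_card v.2, Fintype.card_fin]⟩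
  have efib : ∀ H : A,
      {v : {v : Fin m → V // LinearIndependent (ZMod 2) v} // π v = H} ≃
      {u : Fin m → H.1 // LinearIndependent (ZMod 2) u} := by
    intro H
    refine
      { toFun := fun v => ⟨fun i => ⟨v.1.1 i, ?_⟩, ?_⟩
        invFun := fun u => ⟨⟨fun i => (u.1 i : V),
            u.2.map' H.1.subtype H.1.ker_subtype⟩, ?_⟩
        left_inv := ?_
        right_inv := ?_ }
    · have hsp : span (ZMod 2) (Set.range v.1.1) = H.1 := congrArg Subtype.val v.2
      exact hsp ▸ subset_span (Set.mem_range_self i)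
    · exact LinearIndependent.of_comp H.1.subtype v.1.2
    · apply Subtype.ext
      show span (ZMod 2) (Set.range fun i => (u.1 i : V)) = H.1
      have hrange : Set.range (fun i => (u.1 i : V)) = H.1.subtype '' Set.range u.1 := by
        rw [← Set.range_comp]; rfl
      have htop : span (ZMod 2) (Set.range u.1) = ⊤ := by
        apply Submodule.eq_top_of_finrank_eq
        rw [finrank_span_eq_card u.2, Fintype.card_fin, H.2]
      rw [hrange, Submodule.span_image, htop, Submodule.map_subtype_top]
    · rintro ⟨⟨v, hv⟩, hπ⟩
      apply Subtype.ext; apply Subtype.ext; funext i; rfl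
    · rintro ⟨u, hu⟩
      apply Subtype.ext; funext i; apply Subtype.ext; rfl
  have hfibcard : ∀ H : A,
      Nat.card {v : {v : Fin m → V // LinearIndependent (ZMod 2) v} // π v = H} =
        ∏ i ∈ Finset.range m, (2 ^ m - 2 ^ i) := by
    intro H
    rw [Nat.card_congr (efib H)]
    have := zmod2_card_li H.1 (m := m) (by rw [H.2])
    rwa [H.2] at this
  have etot := (Equiv.sigmaFiberEquiv π).symm
  have h1 : Nat.card {v : Fin m → V // LinearIndependent (ZMod 2) v} =
      Nat.card A * ∏ i ∈ Finset.range m, (2 ^ m - 2 ^ i) := by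
    rw [Nat.card_congr etot]
    letI : Fintype A := Fintype.ofFinite _
    letI : ∀ H : A, Fintype {v : {v : Fin m → V // LinearIndependent (ZMod 2) v} // π v = H} :=
      fun H => Fintype.ofFinite _
    rw [Nat.card_eq_fintype_card, Fintype.card_sigma]
    rw [Finset.sum_congr rfl fun H _ =>
      ((Nat.card_eq_fintype_card (α := {v // π v = H})).symm.trans (hfibcard H))]
    rw [Finset.sum_const, Finset.card_univ, ← Nat.card_eq_fintype_card, smul_eq_mul]
  rw [← h1, zmod2_card_li V (by rw [hfr]; exact hmk), hfr]

lemma zmod2_card' (V : Type*) [AddCommGroup V] [Module (ZMod 2) V] [Finite V] :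
    Nat.card V = 2 ^ finrank (ZMod 2) V := by
  cases nonempty_fintype V
  rw [Nat.card_eq_fintype_card, card_eq_pow_finrank (K := ZMod 2), ZMod.card]

lemma card_isCompl (k : ℕ) (W : Submodule (ZMod 2) (Fin k → ZMod 2)) :
    Nat.card {S : Submodule (ZMod 2) (Fin k → ZMod 2) // IsCompl W S} =
      2 ^ (finrank (ZMod 2) W * (k - finrank (ZMod 2) W)) := by
  classical
  set V := Fin k → ZMod 2
  obtain ⟨K, hK⟩ := Submodule.exists_isCompl W
  have e1 := Submodule.isComplEquivProj W
  have e2 : {f : V →ₗ[ZMod 2] W // ∀ x : W, f x = x} ≃ (K →ₗ[ZMod 2] W) :=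
    { toFun := fun f => f.1 ∘ₗ K.subtype
      invFun := fun g => ⟨W.projectionOnto K hK + g ∘ₗ K.projectionOnto W hK.symm,
        fun x => by
          rw [LinearMap.add_apply, LinearMap.comp_apply, Submodule.projectionOnto_apply_left hK x,
            Submodule.projectionOnto_apply_right hK.symm x, map_zero, add_zero]⟩
      left_inv := by
        rintro ⟨f, hf⟩
        apply Subtype.ext
        apply LinearMap.ext
        intro v
        have hv := Submodule.projection_add_projection_eq_self hK v
        simp only [LinearMap.add_apply, LinearMap.coe_comp, Function.comp_apply,
          Submodule.coe_subtype]
        calc W.projectionOnto K hK v + f ((K.projectionOnto W hK.symm v : V))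
            = f ((W.projectionOnto K hK v : V)) +
              f ((K.projectionOnto W hK.symm v : V)) := by
              rw [hf (W.projectionOnto K hK v)]
          _ = f v := by rw [← map_add]; exact congrArg f hv
      right_inv := by
        intro g
        apply LinearMap.ext
        intro x
        show (W.projectionOnto K hK + g ∘ₗ K.projectionOnto W hK.symm) (x : V) = g x
        rw [LinearMap.add_apply, LinearMap.comp_apply, Submodule.projectionOnto_apply_right hK x,
          Submodule.projectionOnto_apply_left hK.symm x, zero_add] }
  have e3 := ((Module.finBasis (ZMod 2) K).constr (ZMod 2)
    (M' := W)).toEquiv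
  have hcard : Nat.card {S : Submodule (ZMod 2) V // IsCompl W S} =
      Nat.card (Fin (finrank (ZMod 2) K) → W) := by
    rw [Nat.card_congr (e1.trans e2), Nat.card_congr e3.symm]
  rw [hcard, Nat.card_pi, Finset.prod_const, Finset.card_univ, Fintype.card_fin,
    zmod2_card' W]
  rw [← pow_mul]
  congr 1
  have hsum : finrank (ZMod 2) W + finrank (ZMod 2) K = k := by
    rw [Submodule.finrank_add_eq_of_isCompl hK]
    exact Module.finrank_fin_fun _
  have hKr : finrank (ZMod 2) K = k - finrank (ZMod 2) W := by omega
  rw [hKr]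

section Matching

variable {k m : ℕ}

lemma isCompl_iff_aux (hmk : m ≤ k) (H S : Submodule (ZMod 2) (Fin k → ZMod 2))
    (hH : finrank (ZMod 2) H = m) :
    (finrank (ZMod 2) S = k - m ∧ H ⊓ S = ⊥) ↔ IsCompl H S := by
  have hfr : finrank (ZMod 2) (Fin k → ZMod 2) = k := Module.finrank_fin_fun _
  constructor
  · rintro ⟨hS, hb⟩
    refine ⟨disjoint_iff.2 hb, codisjoint_iff.2 ?_⟩
    apply Submodule.eq_top_of_finrank_eq
    have := Submodule.finrank_sup_add_finrank_inf_eq H S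
    rw [hb, finrank_bot, add_zero, hH, hS] at this
    rw [this, hfr]
    omega
  · intro hc
    have hsum : finrank (ZMod 2) H + finrank (ZMod 2) S = k := by
      rw [Submodule.finrank_add_eq_of_isCompl hc]; exact hfr
    exact ⟨by omega, disjoint_iff.1 hc.disjoint⟩

lemma degA (hmk : m ≤ k)
    (H : {H : Submodule (ZMod 2) (Fin k → ZMod 2) // finrank (ZMod 2) H = m}) :
    Nat.card {S : {S : Submodule (ZMod 2) (Fin k → ZMod 2) //
        finrank (ZMod 2) S = k - m} // H.1 ⊓ S.1 = ⊥} = 2 ^ (m * (k - m)) := by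
  have e := Equiv.subtypeSubtypeEquivSubtypeInter
    (fun S : Submodule (ZMod 2) (Fin k → ZMod 2) => finrank (ZMod 2) S = k - m)
    (fun S => H.1 ⊓ S = ⊥)
  have e2 := Equiv.subtypeEquivRight (fun S : Submodule (ZMod 2) (Fin k → ZMod 2) =>
    isCompl_iff_aux hmk H.1 S H.2)
  rw [Nat.card_congr (e.trans e2), card_isCompl, H.2]

lemma degB (hmk : m ≤ k)
    (S : {S : Submodule (ZMod 2) (Fin k → ZMod 2) // finrank (ZMod 2) S = k - m}) :
    Nat.card {H : {H : Submodule (ZMod 2) (Fin k → ZMod 2) //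
        finrank (ZMod 2) H = m} // H.1 ⊓ S.1 = ⊥} = 2 ^ (m * (k - m)) := by
  have e := Equiv.subtypeSubtypeEquivSubtypeInter
    (fun H : Submodule (ZMod 2) (Fin k → ZMod 2) => finrank (ZMod 2) H = m)
    (fun H => H ⊓ S.1 = ⊥)
  have e2 : {H : Submodule (ZMod 2) (Fin k → ZMod 2) //
      finrank (ZMod 2) H = m ∧ H ⊓ S.1 = ⊥} ≃
      {H : Submodule (ZMod 2) (Fin k → ZMod 2) // IsCompl S.1 H} := by
    apply Equiv.subtypeEquivRight
    intro H
    rw [inf_comm]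
    have hkm : k - (k - m) = m := by omega
    constructor
    · rintro ⟨h1, h2⟩
      exact ((isCompl_iff_aux (Nat.sub_le k m) S.1 H S.2).1 ⟨by omega, h2⟩)
    · intro hc
      have := (isCompl_iff_aux (Nat.sub_le k m) S.1 H S.2).2 hc
      exact ⟨by omega, this.2⟩
  rw [Nat.card_congr (e.trans e2), card_isCompl, S.2]
  congr 1
  have : k - (k - m) = m := by omega
  rw [this, Nat.mul_comm]

end Matching

set_option maxHeartbeats 1000000 in
/-- For `k ≥ 2` and `1 ≤ m ≤ k - 1`, there is a bijection `f`
from the `m`-dimensional subspaces of `(ℤ/2ℤ)^k` to its `(k-m)`-dimensional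
subspaces such that `H ∩ f H = {0}` for every `H`. In particular the number of
such pairs, i.e. the number of `m`-dimensional subspaces, is the Gaussian
binomial `binom(k,m)_2`, expressed by the product identity below. -/
theorem exists_matching_complementary_dimensions (k m : ℕ) (hk : 2 ≤ k)
    (hm1 : 1 ≤ m) (hm2 : m ≤ k - 1) :
    (∃ f : {H : Submodule (ZMod 2) (Fin k → ZMod 2) //
              Module.finrank (ZMod 2) H = m} ≃
           {S : Submodule (ZMod 2) (Fin k → ZMod 2) //
              Module.finrank (ZMod 2) S = k - m},
      ∀ H, H.1 ⊓ (f H).1 = ⊥) ∧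
    Nat.card {H : Submodule (ZMod 2) (Fin k → ZMod 2) //
        Module.finrank (ZMod 2) H = m} *
      ∏ i ∈ Finset.Icc 1 m, (2 ^ i - 1) =
      ∏ i ∈ Finset.Icc 1 m, (2 ^ (k - i + 1) - 1) := by
  classical
  have hmk : m ≤ k := by omega
  set d := 2 ^ (m * (k - m)) with hd
  have hdpos : 0 < d := Nat.pow_pos (by norm_num)
  constructor
  · -- Part 1: the matching
    letI : Fintype {H : Submodule (ZMod 2) (Fin k → ZMod 2) //
        finrank (ZMod 2) H = m} := Fintype.ofFinite _
    letI : Fintype {S : Submodule (ZMod 2) (Fin k → ZMod 2) //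
        finrank (ZMod 2) S = k - m} := Fintype.ofFinite _
    set A := {H : Submodule (ZMod 2) (Fin k → ZMod 2) // finrank (ZMod 2) H = m}
    set B := {S : Submodule (ZMod 2) (Fin k → ZMod 2) // finrank (ZMod 2) S = k - m}
    -- equal cardinalities via double counting
    have hcardAB : Nat.card A = Nat.card B := by
      have e : (Σ H : A, {S : B // H.1 ⊓ S.1 = ⊥}) ≃
          (Σ S : B, {H : A // H.1 ⊓ S.1 = ⊥}) :=
        { toFun := fun x => ⟨x.2.1, x.1, x.2.2⟩
          invFun := fun x => ⟨x.2.1, x.1, x.2.2⟩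
          left_inv := fun x => rfl
          right_inv := fun x => rfl }
      have h1 : Nat.card (Σ H : A, {S : B // H.1 ⊓ S.1 = ⊥}) = Nat.card A * d := by
        letI : ∀ H : A, Fintype {S : B // H.1 ⊓ S.1 = ⊥} := fun H => Fintype.ofFinite _
        rw [Nat.card_eq_fintype_card, Fintype.card_sigma,
          Finset.sum_congr rfl fun H _ =>
            ((Nat.card_eq_fintype_card (α := {S : B // H.1 ⊓ S.1 = ⊥})).symm.trans
              (degA hmk H)),
          Finset.sum_const, Finset.card_univ, ← Nat.card_eq_fintype_card, smul_eq_mul]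
      have h2 : Nat.card (Σ S : B, {H : A // H.1 ⊓ S.1 = ⊥}) = Nat.card B * d := by
        letI : ∀ S : B, Fintype {H : A // H.1 ⊓ S.1 = ⊥} := fun S => Fintype.ofFinite _
        rw [Nat.card_eq_fintype_card, Fintype.card_sigma,
          Finset.sum_congr rfl fun S _ =>
            ((Nat.card_eq_fintype_card (α := {H : A // H.1 ⊓ S.1 = ⊥})).symm.trans
              (degB hmk S)),
          Finset.sum_const, Finset.card_univ, ← Nat.card_eq_fintype_card, smul_eq_mul]
      have := h1.symm.trans ((Nat.card_congr e).trans h2)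
      exact Nat.eq_of_mul_eq_mul_right hdpos this
    -- Hall's condition
    set t : A → Finset B := fun H => Finset.univ.filter (fun S => H.1 ⊓ S.1 = ⊥) with ht
    have hdegt : ∀ H : A, (t H).card = d := by
      intro H
      rw [ht]
      rw [← Fintype.card_subtype, ← Nat.card_eq_fintype_card]
      exact degA hmk H
    have hdegt' : ∀ S : B, (Finset.univ.filter (fun H : A => H.1 ⊓ S.1 = ⊥)).card = d := by
      intro S
      rw [← Fintype.card_subtype, ← Nat.card_eq_fintype_card]
      exact degB hmk S
    have hall : ∀ s : Finset A, s.card ≤ (s.biUnion t).card := by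
      intro s
      have h1 : (s.sigma fun H => t H).card = s.card * d := by
        rw [Finset.card_sigma, Finset.sum_congr rfl fun H _ => hdegt H,
          Finset.sum_const, smul_eq_mul]
      have hle : (s.sigma fun H => t H).card ≤
          ((s.biUnion t).sigma fun S => s.filter fun H => H.1 ⊓ S.1 = ⊥).card := by
        apply Finset.card_le_card_of_injOn (fun x => ⟨x.2, x.1⟩)
        · rintro ⟨a, b⟩ hx
          rw [Finset.mem_coe, Finset.mem_sigma] at hx
          obtain ⟨ha, hb⟩ := hx
          rw [Finset.mem_coe, Finset.mem_sigma]
          constructor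
          · exact Finset.mem_biUnion.2 ⟨a, ha, hb⟩
          · rw [Finset.mem_filter]
            refine ⟨ha, ?_⟩
            have := Finset.mem_filter.1 (by rw [ht] at hb; exact hb)
            exact this.2
        · rintro ⟨a, b⟩ _ ⟨a', b'⟩ _ h
          simp only [Sigma.mk.inj_iff, heq_eq_eq] at h
          simp [h.1, h.2]
      have h2 : ((s.biUnion t).sigma fun S => s.filter fun H => H.1 ⊓ S.1 = ⊥).card ≤
          (s.biUnion t).card * d := by
        rw [Finset.card_sigma]
        calc ∑ S ∈ s.biUnion t, (s.filter fun H => H.1 ⊓ S.1 = ⊥).card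
            ≤ ∑ S ∈ s.biUnion t, d := by
              apply Finset.sum_le_sum
              intro S _
              rw [← hdegt' S]
              exact Finset.card_le_card (Finset.filter_subset_filter _ (Finset.subset_univ s))
          _ = (s.biUnion t).card * d := by rw [Finset.sum_const, smul_eq_mul]
      have : s.card * d ≤ (s.biUnion t).card * d := by
        rw [← h1]; exact le_trans hle h2
      exact Nat.le_of_mul_le_mul_right this hdpos
    obtain ⟨f, hfinj, hf⟩ := (Finset.all_card_le_biUnion_card_iff_exists_injective t).1 hall
    have hbij : Function.Bijective f := by
      rw [Fintype.bijective_iff_injective_and_card]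
      exact ⟨hfinj, by rw [← Nat.card_eq_fintype_card, ← Nat.card_eq_fintype_card, hcardAB]⟩
    refine ⟨Equiv.ofBijective f hbij, fun H => ?_⟩
    have := hf H
    rw [ht, Finset.mem_filter] at this
    exact this.2
  · -- Part 2: the counting identity
    have hcount := card_subspaces k m hmk
    set N := Nat.card {H : Submodule (ZMod 2) (Fin k → ZMod 2) //
        finrank (ZMod 2) H = m} with hN
    set T := ∑ i ∈ Finset.range m, i with hT
    have hsplit : ∀ n : ℕ, m ≤ n →
        ∏ i ∈ Finset.range m, (2 ^ n - 2 ^ i) =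
          2 ^ T * ∏ i ∈ Finset.range m, (2 ^ (n - i) - 1) := by
      intro n hn
      rw [hT, ← Finset.prod_pow_eq_pow_sum, ← Finset.prod_mul_distrib]
      apply Finset.prod_congr rfl
      intro i hi
      have hi' : i < m := Finset.mem_range.1 hi
      have h1 : 2 ^ i * (2 ^ (n - i) - 1) = 2 ^ i * 2 ^ (n - i) - 2 ^ i := by
        rw [Nat.mul_sub, mul_one]
      rw [h1, ← pow_add]
      congr 2
      omega
    rw [hsplit m le_rfl, hsplit k hmk, ← mul_assoc, mul_comm N (2 ^ T), mul_assoc] at hcount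
    have hcount2 : N * ∏ i ∈ Finset.range m, (2 ^ (m - i) - 1) =
        ∏ i ∈ Finset.range m, (2 ^ (k - i) - 1) :=
      Nat.eq_of_mul_eq_mul_left (Nat.pow_pos (by norm_num)) hcount
    have hL : ∏ i ∈ Finset.Icc 1 m, (2 ^ i - 1) =
        ∏ i ∈ Finset.range m, (2 ^ (m - i) - 1) := by
      rw [← Finset.Ico_add_one_right_eq_Icc, Finset.prod_Ico_eq_prod_range, Nat.add_sub_cancel,
        ← Finset.prod_range_reflect (fun j => 2 ^ (1 + j) - 1) m]
      apply Finset.prod_congr rfl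
      intro i hi
      have hi' : i < m := Finset.mem_range.1 hi
      congr 2
      omega
    have hR : ∏ i ∈ Finset.Icc 1 m, (2 ^ (k - i + 1) - 1) =
        ∏ i ∈ Finset.range m, (2 ^ (k - i) - 1) := by
      rw [← Finset.Ico_add_one_right_eq_Icc, Finset.prod_Ico_eq_prod_range, Nat.add_sub_cancel]
      apply Finset.prod_congr rfl
      intro i hi
      have hi' : i < m := Finset.mem_range.1 hi
      congr 2
      omega
    rw [hL, hR]
    exact hcount2
end
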